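/- Let F be the standard Laplace cumulative distribution function, F(x) = 1/2 + (1/2) sgn(x) (1 − e^{−|x|}). Then for every threshold τ ≤ 0 and observation y ∈ ℝ, writing v = max(y, τ): twCRPS_τ(F, y) = |v| − 3/4 + e^{−|v|} − (1/8) e^{2τ}. -/

import Mathlib

open MeasureTheory Set

/-- Threshold-weighted CRPS: `twCRPS_τ(F, y) = ∫_τ^∞ (F(z) − 𝟙{z ≥ y})² dz`. -/
noncomputable def twCRPS (F : ℝ → ℝ) (τ y : ℝ) : ℝ :=
  ∫ z in Set.Ioi τ, (F z - if y ≤ z then (1 : ℝ) else 0) ^ 2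

/-- Standard Laplace CDF `F(x) = 1/2 + (1/2) sgn(x) (1 − e^{−|x|})`. -/
noncomputable def laplaceCDF (x : ℝ) : ℝ :=
  1 / 2 + 1 / 2 * Real.sign x * (1 - Real.exp (-|x|))

noncomputable def lap (z : ℝ) : ℝ :=
  if z ≤ 0 then Real.exp z / 2 else 1 - Real.exp (-z) / 2

lemma laplaceCDF_eq : laplaceCDF = lap := by
  funext z
  unfold laplaceCDF lap
  rcases lt_trichotomy z 0 with h | h | h
  · rw [Real.sign_of_neg h, abs_of_neg h, if_pos h.le]; ring
  · simp [h]
  · rw [Real.sign_of_pos h, abs_of_pos h, if_neg (not_le.2 h)]; ring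

lemma lap_cont : Continuous lap := by
  unfold lap
  apply Continuous.if_le (by continuity) (by continuity) continuous_id continuous_const
  intro x hx
  subst hx; norm_num

lemma lap_neg (z : ℝ) : lap (-z) = 1 - lap z := by
  unfold lap
  rcases lt_trichotomy z 0 with h | h | h
  · rw [if_pos h.le, if_neg (by linarith : ¬ -z ≤ 0)]; ring_nf
  · subst h; norm_num
  · rw [if_neg (not_le.2 h), if_pos (by linarith : -z ≤ 0)]; ring_nf

lemma lap_nonneg (z : ℝ) : 0 ≤ lap z := by
  unfold lap
  split
  · positivity
  · nlinarith [Real.exp_le_one_iff.2 (by linarith : -z ≤ 0), Real.exp_pos (-z)]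

lemma lap_le_one (z : ℝ) : lap z ≤ 1 := by
  unfold lap
  split
  · nlinarith [Real.exp_le_one_iff.2 (by assumption : z ≤ 0)]
  · nlinarith [Real.exp_pos (-z)]

noncomputable def Phi (z : ℝ) : ℝ :=
  if z ≤ 0 then Real.exp (2 * z) / 8
  else z + Real.exp (-z) - Real.exp (-(2 * z)) / 8 - 3 / 4

lemma Phi_nonpos {z : ℝ} (h : z ≤ 0) : Phi z = Real.exp (2 * z) / 8 := if_pos h

lemma Phi_nonneg {z : ℝ} (h : 0 ≤ z) :
    Phi z = z + Real.exp (-z) - Real.exp (-(2 * z)) / 8 - 3 / 4 := by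
  rcases eq_or_lt_of_le h with h0 | h0
  · rw [← h0]; unfold Phi; norm_num
  · exact if_neg (not_le.2 h0)

lemma hasDerivAt_g1 (z : ℝ) :
    HasDerivAt (fun w : ℝ => Real.exp (2 * w) / 8) (Real.exp (2 * z) / 4) z := by
  have h : HasDerivAt (fun w : ℝ => Real.exp (2 * w)) (Real.exp (2 * z) * 2) z := by
    simpa using ((hasDerivAt_id z).const_mul 2).exp
  have := h.div_const 8
  exact this.congr_deriv (by ring)

lemma hasDerivAt_g2 (z : ℝ) :
    HasDerivAt (fun w : ℝ => w + Real.exp (-w) - Real.exp (-(2 * w)) / 8 - 3 / 4)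
      (1 - Real.exp (-z) + Real.exp (-(2 * z)) / 4) z := by
  have h1 : HasDerivAt (fun w : ℝ => Real.exp (-w)) (-Real.exp (-z)) z := by
    simpa using (hasDerivAt_id z).neg.exp
  have h2 : HasDerivAt (fun w : ℝ => Real.exp (-(2 * w))) (Real.exp (-(2 * z)) * (-2)) z := by
    simpa using ((hasDerivAt_id z).const_mul 2).neg.exp
  have := (((hasDerivAt_id z).add h1).sub (h2.div_const 8)).sub_const (3/4)
  exact this.congr_deriv (by ring)

lemma exp_two_mul (z : ℝ) : Real.exp (2 * z) = Real.exp z * Real.exp z := by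
  rw [two_mul, Real.exp_add]

lemma lap_sq_neg {z : ℝ} (h : z ≤ 0) : (lap z) ^ 2 = Real.exp (2 * z) / 4 := by
  unfold lap
  rw [if_pos h, div_pow, exp_two_mul, sq]
  norm_num

lemma lap_sq_pos {z : ℝ} (h : 0 ≤ z) :
    (lap z) ^ 2 = 1 - Real.exp (-z) + Real.exp (-(2 * z)) / 4 := by
  have h2 : Real.exp (-(2 * z)) = Real.exp (-z) * Real.exp (-z) := by
    rw [← Real.exp_add]; ring_nf
  rcases eq_or_lt_of_le h with h0 | h0
  · unfold lap; rw [if_pos h0.symm.le, ← h0]; norm_num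
  · unfold lap; rw [if_neg (not_le.2 h0), h2]; ring

lemma hPhi (z : ℝ) : HasDerivAt Phi ((lap z) ^ 2) z := by
  rcases lt_trichotomy z 0 with h | h | h
  · rw [lap_sq_neg h.le]
    apply (hasDerivAt_g1 z).congr_of_eventuallyEq
    filter_upwards [Iio_mem_nhds h] with w hw
    exact Phi_nonpos (le_of_lt (mem_Iio.1 hw))
  · subst h
    have hIic : HasDerivWithinAt Phi ((lap 0) ^ 2) (Iic 0) 0 := by
      rw [lap_sq_neg le_rfl]
      refine ((hasDerivAt_g1 0).hasDerivWithinAt).congr ?_ ?_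
      · intro w hw; exact Phi_nonpos (mem_Iic.1 hw)
      · exact Phi_nonpos le_rfl
    have hIci : HasDerivWithinAt Phi ((lap 0) ^ 2) (Ici 0) 0 := by
      rw [lap_sq_pos le_rfl]
      refine ((hasDerivAt_g2 0).hasDerivWithinAt).congr ?_ ?_
      · intro w hw; exact Phi_nonneg (mem_Ici.1 hw)
      · rw [Phi_nonneg le_rfl]
    have := hIic.union hIci
    rw [Iic_union_Ici] at this
    exact hasDerivWithinAt_univ.1 this
  · rw [lap_sq_pos h.le]
    apply (hasDerivAt_g2 z).congr_of_eventuallyEq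
    filter_upwards [Ioi_mem_nhds h] with w hw
    exact Phi_nonneg (le_of_lt (mem_Ioi.1 hw))

lemma tail_integrable (a : ℝ) : IntegrableOn (fun z => (1 - lap z) ^ 2) (Ioi a) := by
  have hg : IntegrableOn (fun z => Real.exp (-2 * z)) (Ioi a) :=
    exp_neg_integrableOn_Ioi a (by norm_num)
  refine Integrable.mono hg
    (((continuous_const.sub lap_cont).pow 2).aestronglyMeasurable.restrict) ?_
  apply Filter.Eventually.of_forall
  intro z
  rw [Real.norm_eq_abs, Real.norm_eq_abs, abs_of_nonneg (sq_nonneg _),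
    abs_of_nonneg (Real.exp_pos _).le]
  rcases le_or_gt z 0 with h | h
  · have h1 : (1 - lap z) ^ 2 ≤ 1 := by nlinarith [lap_nonneg z, lap_le_one z]
    have h2 : (1 : ℝ) ≤ Real.exp (-2 * z) := Real.one_le_exp_iff.2 (by linarith)
    linarith
  · have he : 1 - lap z = Real.exp (-z) / 2 := by
      unfold lap; rw [if_neg (not_le.2 h)]; ring
    have he2 : Real.exp (-z) * Real.exp (-z) = Real.exp (-2 * z) := by
      rw [← Real.exp_add]; ring_nf
    rw [he, div_pow, sq, he2]
    nlinarith [Real.exp_pos (-2 * z)]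

lemma tail_integral (a : ℝ) : (∫ z in Ioi a, (1 - lap z) ^ 2) = Phi (-a) := by
  have hderiv : ∀ z ∈ Ici a, HasDerivAt (fun w => -Phi (-w)) ((1 - lap z) ^ 2) z := by
    intro z _
    have h1 : HasDerivAt (fun w : ℝ => -w) (-1) z := (hasDerivAt_id z).neg
    have h2 := ((hPhi (-z)).comp z h1).neg
    have h3 : (lap (-z)) ^ 2 = (1 - lap z) ^ 2 := by rw [lap_neg]
    exact h2.congr_deriv (by rw [h3]; ring)
  have htend : Filter.Tendsto (fun w => -Phi (-w)) Filter.atTop (nhds 0) := by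
    have h0 : Filter.Tendsto (fun w : ℝ => -(Real.exp (-2 * w) / 8)) Filter.atTop (nhds 0) := by
      have := ((Real.tendsto_exp_neg_atTop_nhds_zero.comp
        (Filter.tendsto_id.const_mul_atTop (by norm_num : (0:ℝ) < 2))).div_const 8).neg
      simpa using this
    refine h0.congr' ?_
    filter_upwards [Filter.eventually_ge_atTop (0:ℝ)] with w hw
    rw [Phi_nonpos (by linarith : -w ≤ 0), mul_neg, neg_mul]
  rw [integral_Ioi_of_hasDerivAt_of_tendsto' hderiv (tail_integrable a) htend]
  simp

theorem twCRPS_laplace_neg_threshold (τ y : ℝ) (hτ : τ ≤ 0) :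
    twCRPS laplaceCDF τ y =
      |max y τ| - 3 / 4 + Real.exp (-|max y τ|) - 1 / 8 * Real.exp (2 * τ) := by
  set v := max y τ with hv
  have hτv : τ ≤ v := le_max_right _ _
  -- the combined integrand
  set g : ℝ → ℝ := fun z => if v < z then (1 - lap z) ^ 2 else (lap z) ^ 2 with hg
  have hsplit : twCRPS laplaceCDF τ y = (∫ z in Ioc τ v, (lap z) ^ 2)
      + ∫ z in Ioi v, (1 - lap z) ^ 2 := by
    have h1 : twCRPS laplaceCDF τ y = ∫ z in Ioi τ, g z := by
      unfold twCRPS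
      rw [laplaceCDF_eq]
      apply setIntegral_congr_ae measurableSet_Ioi
      have hne : ∀ᵐ z : ℝ, z ≠ v := by
        rw [MeasureTheory.ae_iff]
        have : {z : ℝ | ¬z ≠ v} = {v} := by ext z; simp
        rw [this]
        exact Real.volume_singleton
      filter_upwards [hne] with z hz hzτ
      have hiff : y ≤ z ↔ v < z := by
        constructor
        · intro h; rcases lt_or_eq_of_le (max_le h (le_of_lt (mem_Ioi.1 hzτ))) with h' | h'
          · exact h'
          · exact absurd h'.symm hz
        · intro h; exact le_trans (le_max_left y τ) h.le
      by_cases h : y ≤ z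
      · rw [if_pos h, hg]
        simp only [if_pos (hiff.1 h)]
        ring
      · rw [if_neg h, hg]
        simp only [if_neg (fun hc => h (hiff.2 hc))]
        ring
    have hIoc : IntegrableOn g (Ioc τ v) := by
      apply (((lap_cont.pow 2).integrableOn_Ioc)).congr_fun ?_ measurableSet_Ioc
      intro z hz
      rw [hg]; simp only [if_neg (not_lt.2 hz.2)]; rfl
    have hIoi : IntegrableOn g (Ioi v) := by
      apply (tail_integrable v).congr_fun ?_ measurableSet_Ioi
      intro z hz
      rw [hg]; simp only [if_pos (mem_Ioi.1 hz)]
    rw [h1, ← Set.Ioc_union_Ioi_eq_Ioi hτv,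
      setIntegral_union (Set.Ioc_disjoint_Ioi le_rfl) measurableSet_Ioi hIoc hIoi]
    congr 1
    · apply setIntegral_congr_fun measurableSet_Ioc
      intro z hz; rw [hg]; simp only [if_neg (not_lt.2 hz.2)]
    · apply setIntegral_congr_fun measurableSet_Ioi
      intro z hz; rw [hg]; simp only [if_pos (mem_Ioi.1 hz)]
  have hIoc_val : (∫ z in Ioc τ v, (lap z) ^ 2) = Phi v - Phi τ := by
    rw [← intervalIntegral.integral_of_le hτv]
    exact intervalIntegral.integral_eq_sub_of_hasDerivAt (fun z _ => hPhi z)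
      ((lap_cont.pow 2).intervalIntegrable τ v)
  rw [hsplit, hIoc_val, tail_integral v, Phi_nonpos hτ]
  rcases le_or_gt v 0 with hv0 | hv0
  · rw [Phi_nonpos hv0, Phi_nonneg (by linarith : 0 ≤ -v), abs_of_nonpos hv0]
    have : -(2 * -v) = 2 * v := by ring
    rw [this, neg_neg]
    ring
  · rw [Phi_nonneg hv0.le, Phi_nonpos (by linarith : -v ≤ 0), abs_of_pos hv0]
    have : 2 * -v = -(2 * v) := by ring
    rw [this]
    ring
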